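/- If T is an infinite small tree, then the closure of the set inf(T) of infinite-degree vertices is a rayless subtree of T that contains no leaf (end-point) of T, and hence is properly contained in T. -/

import Mathlib

open SimpleGraph

/-- A ray in a graph: a one-way infinite path. -/
def IsRay {V : Type*} (G : SimpleGraph V) (f : ℕ → V) : Prop :=
  Function.Injective f ∧ ∀ n, G.Adj (f n) (f (n + 1))

/-- The degree of a vertex, as an extended natural number. -/
noncomputable def eDeg {V : Type*} (G : SimpleGraph V) (v : V) : ℕ∞ :=
  (G.neighborSet v).encard

/-- A ray is eventually bare if from some index on all its vertices have degree 2. -/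
def EventuallyBare {V : Type*} (G : SimpleGraph V) (f : ℕ → V) : Prop :=
  ∃ M : ℕ, ∀ n ≥ M, eDeg G (f n) = 2

/-- A tree is small if every ray in it is eventually bare. -/
def IsSmall {V : Type*} (G : SimpleGraph V) : Prop :=
  ∀ f : ℕ → V, IsRay G f → EventuallyBare G f

/-- A minor model of `T` in `S`: pairwise disjoint nonempty connected branch sets,
every edge of `T` witnessed by an edge of `S` between the corresponding branch sets. -/
structure IsModel {V W : Type*} (T : SimpleGraph V) (S : SimpleGraph W)
    (μ : V → Set W) : Prop where
  nonempty : ∀ v, (μ v).Nonempty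
  connected : ∀ v, (S.induce (μ v)).Connected
  disjoint : ∀ v w, v ≠ w → Disjoint (μ v) (μ w)
  edge : ∀ v w, T.Adj v w → ∃ a ∈ μ v, ∃ b ∈ μ w, S.Adj a b

/-- `T` is a minor of `S`. -/
def IsMinorOf {V W : Type*} (T : SimpleGraph V) (S : SimpleGraph W) : Prop :=
  ∃ μ : V → Set W, IsModel T S μ

/-- Tree order relative to a root: `v` lies on the (unique) path from `r` to `w`. -/
def treeLE {V : Type*} (G : SimpleGraph V) (r v w : V) : Prop :=
  v = w ∨ ∃ p : G.Walk r w, p.IsPath ∧ v ∈ p.support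

/-- Closure of a vertex set: the set together with all vertices on paths joining its members. -/
def treeClosure {V : Type*} (G : SimpleGraph V) (A : Set V) : Set V :=
  A ∪ {x | ∃ a ∈ A, ∃ b ∈ A, ∃ p : G.Walk a b, p.IsPath ∧ x ∈ p.support}

section Aux

variable {V : Type*} [DecidableEq V] {T : SimpleGraph V}

lemma aux_path_unique (hT : T.IsTree) {u v : V} {p q : T.Walk u v}
    (hp : p.IsPath) (hq : q.IsPath) : p = q := by
  obtain ⟨r, -, hun⟩ := hT.existsUnique_path u v
  rw [hun p hp, hun q hq]

lemma aux_getVert_inj {u v : V} (p : T.Walk u v) :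
    p.IsPath → ∀ i j, i ≤ p.length → j ≤ p.length →
      p.getVert i = p.getVert j → i = j := by
  induction p with
  | nil =>
    intro _ i j hi hj _
    simp only [Walk.length_nil, Nat.le_zero] at hi hj
    omega
  | cons h q ih =>
    intro hp i j hi hj hij
    rw [Walk.cons_isPath_iff] at hp
    simp only [Walk.length_cons] at hi hj
    match i, j with
    | 0, 0 => rfl
    | 0, j+1 =>
      exfalso
      apply hp.2
      rw [Walk.mem_support_iff_exists_getVert]
      refine ⟨j, ?_, by omega⟩
      simpa [Walk.getVert_cons_succ] using hij.symm
    | i+1, 0 =>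
      exfalso
      apply hp.2
      rw [Walk.mem_support_iff_exists_getVert]
      refine ⟨i, ?_, by omega⟩
      simpa [Walk.getVert_cons_succ] using hij
    | i+1, j+1 =>
      simp only [Walk.getVert_cons_succ] at hij
      have := ih hp.1 i j (by omega) (by omega) hij
      omega

lemma aux_dropUntil_eq (hT : T.IsTree) {r x y : V} (p : T.Walk r x) (hp : p.IsPath)
    (hy : y ∈ p.support) (hadj : T.Adj y x) (hne : y ≠ x) :
    p.dropUntil y hy = Walk.cons hadj Walk.nil := by
  have h1 : (p.dropUntil y hy).IsPath := hp.dropUntil hy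
  have h2 : (Walk.cons hadj (Walk.nil : T.Walk x x)).IsPath := by
    rw [Walk.cons_isPath_iff]
    exact ⟨Walk.IsPath.nil, by simpa using hne⟩
  exact aux_path_unique hT h1 h2

lemma aux_neighbor_in_support (hT : T.IsTree) {r x y : V} (p : T.Walk r x) (hp : p.IsPath)
    (hy : y ∈ p.support) (hadj : T.Adj y x) (hne : y ≠ x) :
    y = p.getVert (p.length - 1) := by
  have hd := aux_dropUntil_eq hT p hp hy hadj hne
  have hs := p.take_spec hy
  rw [hd] at hs
  have hlen : p.length = (p.takeUntil y hy).length + 1 := by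
    conv_lhs => rw [← hs]
    simp [Walk.length_append]
  have hy' : y = ((p.takeUntil y hy).append (Walk.cons hadj Walk.nil)).getVert
      ((p.takeUntil y hy).length) := by
    rw [Walk.getVert_append]
    simp
  rw [hs] at hy'
  rw [hlen, Nat.add_sub_cancel]
  exact hy'

lemma aux_extend (hT : T.IsTree) {r x : V} (p : T.Walk r x) (hp : p.IsPath)
    (h2 : (T.neighborSet x).Nontrivial) :
    ∃ y, ∃ h : T.Adj x y, y ∉ p.support := by
  obtain ⟨y1, hy1, y2, hy2, hne⟩ := h2
  rw [mem_neighborSet] at hy1 hy2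
  by_cases h1 : y1 ∈ p.support
  · by_cases h2' : y2 ∈ p.support
    · exfalso
      apply hne
      rw [aux_neighbor_in_support hT p hp h1 hy1.symm hy1.ne',
        aux_neighbor_in_support hT p hp h2' hy2.symm hy2.ne']
    · exact ⟨y2, hy2, h2'⟩
  · exact ⟨y1, hy1, h1⟩

lemma aux_concat_isPath {r x y : V} {p : T.Walk r x} (hp : p.IsPath)
    (h : T.Adj x y) (hy : y ∉ p.support) : (p.concat h).IsPath := by
  rw [Walk.isPath_def, Walk.concat, Walk.support_append]
  have htail : (Walk.cons h (Walk.nil : T.Walk y y)).support.tail = [y] := by simp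
  rw [htail, List.nodup_append]
  exact ⟨hp.support_nodup, List.nodup_singleton y,
    fun a ha b hb hab => hy (by simp at hb; rw [← hb, ← hab]; exact ha)⟩

lemma aux_exists_ray (hT : T.IsTree) (h2 : ∀ v, (T.neighborSet v).Nontrivial) :
    ∃ f : ℕ → V, IsRay T f := by
  obtain ⟨r⟩ := hT.isConnected.nonempty
  have step : ∀ s : (Σ x : V, {p : T.Walk r x // p.IsPath}),
      ∃ s' : (Σ x : V, {p : T.Walk r x // p.IsPath}),
        T.Adj s.1 s'.1 ∧ s'.2.1.length = s.2.1.length + 1 := by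
    rintro ⟨x, p, hp⟩
    obtain ⟨y, h, hy⟩ := aux_extend hT p hp (h2 x)
    exact ⟨⟨y, p.concat h, aux_concat_isPath hp h hy⟩, h, by simp [Walk.length_concat]⟩
  choose st hadj hlen using step
  set c : ℕ → (Σ x : V, {p : T.Walk r x // p.IsPath}) :=
    fun n => st^[n] ⟨r, Walk.nil, Walk.IsPath.nil⟩ with hcdef
  have hc : ∀ n, c (n+1) = st (c n) := fun n => Function.iterate_succ_apply' st n _
  have hlen' : ∀ n, (c n).2.1.length = n := by
    intro n
    induction n with
    | zero => rfl
    | succ n ih => rw [hc n, hlen (c n), ih]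
  refine ⟨fun n => (c n).1, ?_, ?_⟩
  · intro m n hmn
    have h1 : ((c m).2.1.copy rfl hmn).IsPath := (Walk.isPath_copy _ _ _).mpr (c m).2.2
    have he := aux_path_unique hT h1 (c n).2.2
    have hl := congrArg Walk.length he
    rwa [Walk.length_copy, hlen' m, hlen' n] at hl
  · intro n
    show T.Adj (c n).1 (c (n+1)).1
    rw [hc n]
    exact hadj (c n)

lemma aux_two_mem {s : Set V} (hs : s.encard = 2) {u w z : V}
    (hu : u ∈ s) (hw : w ∈ s) (hz : z ∈ s) (huw : u ≠ w) : z = u ∨ z = w := by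
  obtain ⟨x, y, hxy, rfl⟩ := Set.encard_eq_two.mp hs
  simp only [Set.mem_insert_iff, Set.mem_singleton_iff] at hu hw hz
  rcases hu with rfl | rfl <;> rcases hw with rfl | rfl <;> tauto

lemma aux_interior {a b v : V} (p : T.Walk a b) (hp : p.IsPath)
    (hv : v ∈ p.support) (hva : v ≠ a) (hvb : v ≠ b) :
    ∃ (q1 : T.Walk v a) (q2 : T.Walk v b), q1.IsPath ∧ q2.IsPath ∧
      1 ≤ q1.length ∧ 1 ≤ q2.length ∧ q1.getVert 1 ≠ q2.getVert 1 ∧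
      T.Adj v (q1.getVert 1) ∧ T.Adj v (q2.getVert 1) := by
  set t := p.takeUntil v hv with htdef
  set d := p.dropUntil v hv with hddef
  have hl1 : 1 ≤ t.length := by
    by_contra hcon
    have ht0 : t.length = 0 := by omega
    exact hva (Walk.eq_of_length_eq_zero ht0).symm
  have hl2 : 1 ≤ d.length := by
    by_contra hcon
    have hd0 : d.length = 0 := by omega
    exact hvb (Walk.eq_of_length_eq_zero hd0)
  have hq1p : t.reverse.IsPath := (hp.takeUntil hv).reverse
  have hq2p : d.IsPath := hp.dropUntil hv
  have hq1l : 1 ≤ t.reverse.length := by rwa [Walk.length_reverse]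
  have hadj1 : T.Adj v (t.reverse.getVert 1) := by
    have := t.reverse.adj_getVert_succ (i := 0) (by omega)
    simpa using this
  have hadj2 : T.Adj v (d.getVert 1) := by
    have := d.adj_getVert_succ (i := 0) (by omega)
    simpa using this
  refine ⟨t.reverse, d, hq1p, hq2p, hq1l, hl2, ?_, hadj1, hadj2⟩
  -- distinctness
  intro heq
  have hmem1 : t.reverse.getVert 1 ∈ t.support := by
    have : t.reverse.getVert 1 ∈ t.reverse.support := by
      rw [Walk.mem_support_iff_exists_getVert]
      exact ⟨1, rfl, by omega⟩
    rwa [Walk.support_reverse, List.mem_reverse] at this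
  have hmem2 : d.getVert 1 ∈ d.support.tail := by
    have h1 : d.getVert 1 ∈ d.support := by
      rw [Walk.mem_support_iff_exists_getVert]
      exact ⟨1, rfl, by omega⟩
    have h2 : d.getVert 1 ≠ v := hadj2.ne'
    rw [d.support_eq_cons, List.mem_cons] at h1
    rcases h1 with h1 | h1
    · exact absurd h1 h2
    · exact h1
  have hsupp : p.support = t.support ++ d.support.tail := by
    conv_lhs => rw [← p.take_spec hv]
    rw [Walk.support_append]
  have hnodup := hp.support_nodup
  rw [hsupp, List.nodup_append] at hnodup
  exact hnodup.2.2 _ hmem1 _ hmem2 heq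

lemma aux_descend (hT : T.IsTree) (g : ℕ → V) (hg : IsRay T g)
    (hdeg : ∀ n, eDeg T (g n) = 2) :
    ∀ (L k : ℕ) (b : V) (q : T.Walk (g k) b), q.IsPath → q.length = L → 1 ≤ L →
      g (k+1) = q.getVert 1 → eDeg T b ≠ ⊤ := by
  intro L
  induction L with
  | zero => intro k b q _ _ h1; omega
  | succ L ih =>
    intro k b q hq hlen _ hg1 htop
    by_cases hL : L = 0
    · have hb : q.getVert 1 = b := by
        have := q.getVert_length
        rw [hlen, hL] at this
        simpa using this
      have hcon : eDeg T (g (k+1)) = ⊤ := by rw [hg1, hb]; exact htop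
      rw [hdeg (k+1)] at hcon
      simp at hcon
    · have hnnil : ¬ q.Nil := Walk.not_nil_iff_lt_length.mpr (by omega)
      have hadj12 : T.Adj (g (k+1)) (q.getVert 2) := by
        have := q.adj_getVert_succ (i := 1) (by omega)
        rwa [← hg1] at this
      have hne02 : g k ≠ q.getVert 2 := by
        intro h
        have h0 : q.getVert 0 = q.getVert 2 := by rw [Walk.getVert_zero]; exact h
        have := aux_getVert_inj q hq 0 2 (by omega) (by omega) h0
        omega
      have hm0 : g k ∈ T.neighborSet (g (k+1)) := (hg.2 k).symm
      have hm2 : q.getVert 2 ∈ T.neighborSet (g (k+1)) := hadj12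
      have hm3 : g (k+2) ∈ T.neighborSet (g (k+1)) := hg.2 (k+1)
      have hne03 : g (k+2) ≠ g k := fun h => by have := hg.1 h; omega
      have hkey : g (k+2) = q.getVert 2 := by
        rcases aux_two_mem (hdeg (k+1)) hm2 hm0 hm3 (Ne.symm hne02) with h | h
        · exact h
        · exact absurd h hne03
      refine ih (k+1) b ((q.tail).copy hg1.symm rfl) ?_ ?_ (by omega) ?_ htop
      · exact (Walk.isPath_copy _ _ _).mpr (hq.tail)
      · rw [Walk.length_copy]
        have := Walk.length_tail_add_one hnnil
        omega
      · rw [Walk.getVert_copy, Walk.getVert_tail]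
        exact hkey

end Aux

/-- For an infinite small tree `T`, the closure of the set of
infinite-degree vertices is a rayless subtree of `T` containing no leaf of `T`, hence
properly contained in `T`. -/
theorem stmt13 {V : Type*} [Infinite V] (T : SimpleGraph V) (hT : T.IsTree)
    (hsmall : IsSmall T) :
    (¬∃ f : ℕ → V, IsRay T f ∧ ∀ n, f n ∈ treeClosure T {v | eDeg T v = ⊤}) ∧
    (∀ v ∈ treeClosure T {v | eDeg T v = ⊤}, eDeg T v ≠ 1) ∧
    ((treeClosure T {v | eDeg T v = ⊤}).Nonempty →
      (T.induce (treeClosure T {v | eDeg T v = ⊤})).Connected) ∧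
    treeClosure T {v | eDeg T v = ⊤} ≠ Set.univ := by
  classical
  set A : Set V := {v | eDeg T v = ⊤} with hAdef
  set C : Set V := treeClosure T A with hCdef
  have hmemC : ∀ x, x ∈ C ↔ (x ∈ A ∨
      ∃ a ∈ A, ∃ b ∈ A, ∃ p : T.Walk a b, p.IsPath ∧ x ∈ p.support) := by
    intro x
    simp only [hCdef, treeClosure, Set.mem_union, Set.mem_setOf_eq]
  -- Part 1 : no ray in the closure
  have part1 : ¬∃ f : ℕ → V, IsRay T f ∧ ∀ n, f n ∈ C := by
    rintro ⟨f, hf, hfC⟩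
    obtain ⟨M, hM⟩ := hsmall f hf
    set g : ℕ → V := fun n => f (M + n) with hgdef
    have hg : IsRay T g := by
      constructor
      · intro a b h
        have := hf.1 h
        omega
      · intro n
        exact hf.2 (M + n)
    have hdeg : ∀ n, eDeg T (g n) = 2 := fun n => hM (M + n) (Nat.le_add_right _ _)
    have hg0 : g 0 ∈ C := hfC M
    rcases (hmemC (g 0)).mp hg0 with h0 | ⟨a, ha, b, hb, p, hp, hvp⟩
    · have : eDeg T (g 0) = ⊤ := h0
      rw [hdeg 0] at this
      simp at this
    · have hga : g 0 ≠ a := by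
        intro h
        have := ha
        rw [← h] at this
        have h2 : eDeg T (g 0) = ⊤ := this
        rw [hdeg 0] at h2
        simp at h2
      have hgb : g 0 ≠ b := by
        intro h
        have := hb
        rw [← h] at this
        have h2 : eDeg T (g 0) = ⊤ := this
        rw [hdeg 0] at h2
        simp at h2
      obtain ⟨q1, q2, hq1, hq2, hl1, hl2, hne12, hadj1, hadj2⟩ :=
        aux_interior p hp hvp hga hgb
      have hm1 : q1.getVert 1 ∈ T.neighborSet (g 0) := hadj1
      have hm2 : q2.getVert 1 ∈ T.neighborSet (g 0) := hadj2
      have hm3 : g 1 ∈ T.neighborSet (g 0) := hg.2 0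
      rcases aux_two_mem (hdeg 0) hm1 hm2 hm3 hne12 with h | h
      · exact aux_descend hT g hg hdeg q1.length 0 a q1 hq1 rfl hl1 h ha
      · exact aux_descend hT g hg hdeg q2.length 0 b q2 hq2 rfl hl2 h hb
  -- Part 2 : no leaf in the closure
  have part2 : ∀ v ∈ C, eDeg T v ≠ 1 := by
    intro v hv
    rcases (hmemC v).mp hv with h0 | ⟨a, ha, b, hb, p, hp, hvp⟩
    · have hv' : eDeg T v = ⊤ := h0
      rw [hv']
      simp
    · by_cases hva : v = a
      · subst hva
        have hv' : eDeg T v = ⊤ := ha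
        rw [hv']
        simp
      · by_cases hvb : v = b
        · subst hvb
          have hv' : eDeg T v = ⊤ := hb
          rw [hv']
          simp
        · obtain ⟨q1, q2, _, _, _, _, hne12, hadj1, hadj2⟩ :=
            aux_interior p hp hvp hva hvb
          have hlt : 1 < (T.neighborSet v).encard :=
            Set.one_lt_encard_iff.mpr
              ⟨q1.getVert 1, q2.getVert 1, hadj1, hadj2, hne12⟩
          intro h
          have h' : (T.neighborSet v).encard = 1 := h
          rw [h'] at hlt
          exact lt_irrefl _ hlt
  -- Part 3 : the closure induces a connected subgraph
  have reach : ∀ {x y : V} (p : T.Walk x y), (∀ z ∈ p.support, z ∈ C) →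
      ∀ (hx : x ∈ C) (hy : y ∈ C), (T.induce C).Reachable ⟨x, hx⟩ ⟨y, hy⟩ := by
    intro x y p
    induction p with
    | nil => intro _ hx hy; exact Reachable.refl _
    | @cons x' w y' h q ih =>
      intro hs hx hy
      have hw : w ∈ C := hs w (by simp)
      have hadj : (T.induce C).Adj ⟨x', hx⟩ ⟨w, hw⟩ := h
      exact (hadj.reachable).trans (ih (fun z hz => hs z (by simp [hz])) hw hy)
  have key : ∀ x, x ∈ C → ∃ a, a ∈ A ∧ a ∈ C ∧
      ∃ p : T.Walk x a, ∀ z ∈ p.support, z ∈ C := by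
    intro x hx
    rcases (hmemC x).mp hx with h0 | ⟨a, ha, b, hb, p, hp, hxp⟩
    · refine ⟨x, h0, hx, Walk.nil, ?_⟩
      intro z hz
      simp only [Walk.support_nil, List.mem_singleton] at hz
      subst hz
      exact hx
    · have haC : a ∈ C := (hmemC a).mpr (Or.inl ha)
      refine ⟨a, ha, haC, (p.takeUntil x hxp).reverse, ?_⟩
      intro z hz
      rw [Walk.support_reverse, List.mem_reverse] at hz
      have hzp : z ∈ p.support := p.support_takeUntil_subset hxp hz
      exact (hmemC z).mpr (Or.inr ⟨a, ha, b, hb, p, hp, hzp⟩)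
  have part3 : C.Nonempty → (T.induce C).Connected := by
    intro hCne
    rw [connected_iff]
    constructor
    · rintro ⟨x, hx⟩ ⟨y, hy⟩
      obtain ⟨a, ha, haC, px, hpx⟩ := key x hx
      obtain ⟨a', ha', haC', py, hpy⟩ := key y hy
      obtain ⟨w⟩ := hT.isConnected.preconnected a a'
      have hpb : w.bypass.IsPath := w.bypass_isPath
      have hsb : ∀ z ∈ w.bypass.support, z ∈ C := by
        intro z hz
        exact (hmemC z).mpr (Or.inr ⟨a, ha, a', ha', w.bypass, hpb, hz⟩)
      exact ((reach px hpx hx haC).trans (reach w.bypass hsb haC haC')).trans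
        (reach py hpy hy haC').symm
    · obtain ⟨x, hx⟩ := hCne
      exact ⟨⟨x, hx⟩⟩
  -- Part 4 : proper containment
  have part4 : C ≠ Set.univ := by
    intro huniv
    have h2 : ∀ v, (T.neighborSet v).Nontrivial := by
      intro v
      have hv : v ∈ C := huniv ▸ Set.mem_univ v
      have hne1 : eDeg T v ≠ 1 := part2 v hv
      have hvne : (T.neighborSet v).Nonempty := by
        obtain ⟨w, hw⟩ := exists_ne v
        obtain ⟨p⟩ := hT.isConnected.preconnected v w
        have hlen : 0 < p.length := by
          rcases Nat.eq_zero_or_pos p.length with h | h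
          · exact absurd (Walk.eq_of_length_eq_zero h) hw.symm
          · exact h
        have := p.adj_getVert_succ (i := 0) hlen
        rw [Walk.getVert_zero] at this
        exact ⟨p.getVert 1, this⟩
      have h0 : (T.neighborSet v).encard ≠ 0 := by
        intro h
        rw [Set.encard_eq_zero] at h
        rw [h] at hvne
        exact Set.not_nonempty_empty hvne
      have hlt : 1 < (T.neighborSet v).encard :=
        lt_of_le_of_ne (ENat.one_le_iff_ne_zero.mpr h0) (Ne.symm hne1)
      rw [Set.one_lt_encard_iff] at hlt
      obtain ⟨x, y, hx, hy, hxy⟩ := hlt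
      exact ⟨x, hx, y, hy, hxy⟩
    obtain ⟨f, hf⟩ := aux_exists_ray hT h2
    exact part1 ⟨f, hf, fun n => huniv ▸ Set.mem_univ _⟩
  exact ⟨part1, part2, part3, part4⟩
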